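/- arXiv:1411.6685 — 3 statements merged into one kernel-verified Lean document; each statement's English description precedes it below -/
import Mathlib

section
/- For x ∈ ℝ^N with transformed variables x_i = e^{x̃_i}, the function x̃ ↦ log X(e^{x̃}) is convex, where X(x) = T_e + Σ_{j=1}^N T_{s,j} x_j ∏_{k=1}^{j-1} (1 + x_k), with constants T_e > 0 and T_{s,j} > 0. -/
/-- A positive, multiplicatively log-convex function on `Fin N → ℝ`. -/
def LCaux (N : ℕ) (f : (Fin N → ℝ) → ℝ) : Prop :=
  (∀ x, 0 < f x) ∧ ∀ (x y : Fin N → ℝ) (a b : ℝ), 0 ≤ a → 0 ≤ b → a + b = 1 →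
    f (a • x + b • y) ≤ f x ^ a * f y ^ b

lemma LCaux.const (N : ℕ) {c : ℝ} (hc : 0 < c) : LCaux N (fun _ => c) := by
  refine ⟨fun _ => hc, fun x y a b ha hb hab => ?_⟩
  rw [← Real.rpow_add hc, hab, Real.rpow_one]

lemma LCaux.expCoord (N : ℕ) (j : Fin N) : LCaux N (fun x => Real.exp (x j)) := by
  refine ⟨fun _ => Real.exp_pos _, fun x y a b ha hb hab => ?_⟩
  have h : ∀ u v : ℝ, Real.exp u ^ v = Real.exp (v * u) := by
    intro u v
    rw [Real.rpow_def_of_pos (Real.exp_pos u), Real.log_exp, mul_comm]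
  rw [h, h, ← Real.exp_add]
  simp

lemma holder2 {A B C D t s : ℝ} (hA : 0 < A) (hB : 0 < B) (hC : 0 < C) (hD : 0 < D)
    (ht : 0 ≤ t) (hs : 0 ≤ s) (hts : t + s = 1) :
    A ^ t * C ^ s + B ^ t * D ^ s ≤ (A + B) ^ t * (C + D) ^ s := by
  have hP : 0 < A + B := by linarith
  have hQ : 0 < C + D := by linarith
  have hPQ : 0 < (A + B) ^ t * (C + D) ^ s :=
    mul_pos (Real.rpow_pos_of_pos hP t) (Real.rpow_pos_of_pos hQ s)
  have e1 : A ^ t * C ^ s = (A + B) ^ t * (C + D) ^ s * ((A / (A + B)) ^ t * (C / (C + D)) ^ s) := by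
    rw [Real.div_rpow hA.le hP.le, Real.div_rpow hC.le hQ.le]
    field_simp
  have e2 : B ^ t * D ^ s = (A + B) ^ t * (C + D) ^ s * ((B / (A + B)) ^ t * (D / (C + D)) ^ s) := by
    rw [Real.div_rpow hB.le hP.le, Real.div_rpow hD.le hQ.le]
    field_simp
  have g1 : (A / (A + B)) ^ t * (C / (C + D)) ^ s ≤ t * (A / (A + B)) + s * (C / (C + D)) :=
    Real.geom_mean_le_arith_mean2_weighted ht hs (by positivity) (by positivity) hts
  have g2 : (B / (A + B)) ^ t * (D / (C + D)) ^ s ≤ t * (B / (A + B)) + s * (D / (C + D)) :=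
    Real.geom_mean_le_arith_mean2_weighted ht hs (by positivity) (by positivity) hts
  rw [e1, e2, ← mul_add]
  have key : (A / (A + B)) ^ t * (C / (C + D)) ^ s + (B / (A + B)) ^ t * (D / (C + D)) ^ s ≤ 1 := by
    calc _ ≤ (t * (A / (A + B)) + s * (C / (C + D))) + (t * (B / (A + B)) + s * (D / (C + D))) :=
          add_le_add g1 g2
      _ = t * ((A + B) / (A + B)) + s * ((C + D) / (C + D)) := by ring
      _ = 1 := by rw [div_self hP.ne', div_self hQ.ne']; linarith
  calc (A + B) ^ t * (C + D) ^ s *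
        ((A / (A + B)) ^ t * (C / (C + D)) ^ s + (B / (A + B)) ^ t * (D / (C + D)) ^ s)
      ≤ (A + B) ^ t * (C + D) ^ s * 1 := by
        exact mul_le_mul_of_nonneg_left key hPQ.le
    _ = (A + B) ^ t * (C + D) ^ s := by ring

lemma LCaux.add {N : ℕ} {f g : (Fin N → ℝ) → ℝ} (hf : LCaux N f) (hg : LCaux N g) :
    LCaux N (fun x => f x + g x) := by
  refine ⟨fun x => add_pos (hf.1 x) (hg.1 x), fun x y a b ha hb hab => ?_⟩
  calc f (a • x + b • y) + g (a • x + b • y)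
      ≤ f x ^ a * f y ^ b + g x ^ a * g y ^ b := add_le_add (hf.2 x y a b ha hb hab)
        (hg.2 x y a b ha hb hab)
    _ ≤ (f x + g x) ^ a * (f y + g y) ^ b :=
        holder2 (hf.1 x) (hg.1 x) (hf.1 y) (hg.1 y) ha hb hab

lemma LCaux.mul {N : ℕ} {f g : (Fin N → ℝ) → ℝ} (hf : LCaux N f) (hg : LCaux N g) :
    LCaux N (fun x => f x * g x) := by
  refine ⟨fun x => mul_pos (hf.1 x) (hg.1 x), fun x y a b ha hb hab => ?_⟩
  calc f (a • x + b • y) * g (a • x + b • y)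
      ≤ (f x ^ a * f y ^ b) * (g x ^ a * g y ^ b) := by
        apply mul_le_mul (hf.2 x y a b ha hb hab) (hg.2 x y a b ha hb hab)
          (hg.1 _).le
        exact mul_nonneg (Real.rpow_nonneg (hf.1 x).le a) (Real.rpow_nonneg (hf.1 y).le b)
    _ = (f x * g x) ^ a * (f y * g y) ^ b := by
        rw [Real.mul_rpow (hf.1 x).le (hg.1 x).le, Real.mul_rpow (hf.1 y).le (hg.1 y).le]
        ring

lemma LCaux.prod {N : ℕ} {ι : Type*} (s : Finset ι) (f : ι → (Fin N → ℝ) → ℝ)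
    (hf : ∀ i ∈ s, LCaux N (f i)) : LCaux N (fun x => ∏ i ∈ s, f i x) := by
  classical
  induction s using Finset.induction_on with
  | empty => simpa using LCaux.const N one_pos
  | insert _ _ hnot ih =>
    rename_i a s
    simp only [Finset.prod_insert hnot]
    exact LCaux.mul (hf a (Finset.mem_insert_self a s))
      (ih fun i hi => hf i (Finset.mem_insert_of_mem hi))

lemma LCaux.sum {N : ℕ} {ι : Type*} (s : Finset ι) (f : ι → (Fin N → ℝ) → ℝ) {c : ℝ} (hc : 0 < c)
    (hf : ∀ i ∈ s, LCaux N (f i)) : LCaux N (fun x => c + ∑ i ∈ s, f i x) := by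
  classical
  induction s using Finset.induction_on with
  | empty => simpa using LCaux.const N hc
  | insert _ _ hnot ih =>
    rename_i a s
    have := (hf a (Finset.mem_insert_self a s)).add (ih fun i hi => hf i (Finset.mem_insert_of_mem hi))
    simp only [Finset.sum_insert hnot]
    have heq : (fun x => c + (f a x + ∑ i ∈ s, f i x)) =
        (fun x => f a x + (c + ∑ i ∈ s, f i x)) := by funext x; ring
    rw [heq]
    exact this

lemma LCaux.convexOn_log {N : ℕ} {f : (Fin N → ℝ) → ℝ} (hf : LCaux N f) :
    ConvexOn ℝ Set.univ (fun x => Real.log (f x)) := by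
  refine ⟨convex_univ, fun x _ y _ a b ha hb hab => ?_⟩
  calc Real.log (f (a • x + b • y)) ≤ Real.log (f x ^ a * f y ^ b) :=
        Real.log_le_log (hf.1 _) (hf.2 x y a b ha hb hab)
    _ = a * Real.log (f x) + b * Real.log (f y) := by
        rw [Real.log_mul (Real.rpow_pos_of_pos (hf.1 x) a).ne' (Real.rpow_pos_of_pos (hf.1 y) b).ne',
          Real.log_rpow (hf.1 x), Real.log_rpow (hf.1 y)]
    _ = a • Real.log (f x) + b • Real.log (f y) := by simp

/-- `xt ↦ log X(e^{xt})` is convex, where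
`X(x) = T_e + ∑_j T_{s,j} x_j ∏_{k<j} (1 + x_k)`. -/
theorem log_X_exp_convex (N : ℕ) (Te : ℝ) (Ts : Fin N → ℝ)
    (hTe : 0 < Te) (hTs : ∀ j, 0 < Ts j) :
    ConvexOn ℝ Set.univ
      (fun xt : Fin N → ℝ =>
        Real.log (Te + ∑ j, Ts j * Real.exp (xt j) *
          ∏ k ∈ Finset.univ.filter (· < j), (1 + Real.exp (xt k)))) := by
  apply LCaux.convexOn_log
  apply LCaux.sum _ _ hTe
  intro j _
  apply LCaux.mul
  · exact LCaux.mul (LCaux.const N (hTs j)) (LCaux.expCoord N j)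
  · apply LCaux.prod
    intro k _
    exact LCaux.add (LCaux.const N one_pos) (LCaux.expCoord N k)
end

section
/- The total airtime of station i, defined as T_i·T_slot = τ_i(1-p_{n,i})∏_{j≠i}(1-τ_j)T_{s,i} + τ_i p_{n,i} ∏_{j≠i}(1-τ_j) T_{s,i} + τ_i (1-∏_{j=1}^{i-1}(1-τ_j)) ∏_{j=i+1}^N (1-τ_j) T_{s,i} + τ_i Σ_{j=i+1}^N τ_j ∏_{k=j+1}^N (1-τ_k) T_{s,j}, simplifies to τ_i ( ∏_{j=i+1}^N (1-τ_j) T_{s,i} + Σ_{j=i+1}^N τ_j ∏_{k=j+1}^N (1-τ_k) T_{s,j} ), which is independent of the link-error probabilities p_{n,i}. -/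
/-- The four-term total-airtime expression of station `i` simplifies to a form
independent of the link-error probabilities `p_{n,i}`. -/
theorem airtime_simplification (N : ℕ) (τ pn Ts : Fin N → ℝ)
    (hτ : ∀ i, τ i ∈ Set.Icc (0 : ℝ) 1) (hpn : ∀ i, pn i ∈ Set.Icc (0 : ℝ) 1)
    (hTs : Monotone Ts) (i : Fin N) :
    τ i * (1 - pn i) * (∏ j ∈ Finset.univ.filter (· ≠ i), (1 - τ j)) * Ts i +
    τ i * pn i * (∏ j ∈ Finset.univ.filter (· ≠ i), (1 - τ j)) * Ts i +
    τ i * (1 - ∏ j ∈ Finset.univ.filter (· < i), (1 - τ j)) *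
      (∏ j ∈ Finset.univ.filter (i < ·), (1 - τ j)) * Ts i +
    τ i * ∑ j ∈ Finset.univ.filter (i < ·),
      τ j * (∏ k ∈ Finset.univ.filter (j < ·), (1 - τ k)) * Ts j =
    τ i * ((∏ j ∈ Finset.univ.filter (i < ·), (1 - τ j)) * Ts i +
      ∑ j ∈ Finset.univ.filter (i < ·),
        τ j * (∏ k ∈ Finset.univ.filter (j < ·), (1 - τ k)) * Ts j) := by

  have hsplit : (∏ j ∈ Finset.univ.filter (· ≠ i), (1 - τ j)) =
      (∏ j ∈ Finset.univ.filter (· < i), (1 - τ j)) *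
      (∏ j ∈ Finset.univ.filter (i < ·), (1 - τ j)) := by
    rw [← Finset.prod_union]
    · apply Finset.prod_congr _ (fun _ _ => rfl)
      ext j
      simp [Finset.mem_union, lt_or_lt_iff_ne, ne_comm]
    · simp only [Finset.disjoint_left, Finset.mem_filter]
      rintro j ⟨_, h1⟩ ⟨_, h2⟩
      exact absurd (h1.trans h2) (lt_irrefl j)
  rw [hsplit]; ring
end

section
/- If all stations have equal transmission durations T_{s,i} = T_s and the equal-airtime condition T_i = 1/N holds for all i, then all transformed attempt rates are equal: x_1 = x_2 = … = x_N (equivalently τ_1 = … = τ_N). -/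
open Finset

lemma tele_range (y : ℕ → ℝ) (a b : ℕ) (hab : a ≤ b) :
    (∏ k ∈ range a, (1 + y k)) + ∑ j ∈ Ico a b, y j * ∏ k ∈ range j, (1 + y k)
      = ∏ k ∈ range b, (1 + y k) := by
  induction b, hab using Nat.le_induction with
  | base => simp
  | succ b hab ih =>
      rw [Finset.sum_Ico_succ_top hab, prod_range_succ, ← ih]
      ring

lemma fin_prod_to_nat {N : ℕ} (s : Finset ℕ) (hs : ∀ a ∈ s, a < N)
    (f : Fin N → ℝ) (g : ℕ → ℝ) (hfg : ∀ k : Fin N, (k : ℕ) ∈ s → f k = g k) :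
    ∏ k ∈ univ.filter (fun k : Fin N => (k : ℕ) ∈ s), f k = ∏ a ∈ s, g a := by
  refine Finset.prod_bij' (fun (k : Fin N) _ => (k : ℕ))
    (fun (a : ℕ) ha => (⟨a, hs a ha⟩ : Fin N)) ?_ ?_ ?_ ?_ ?_
  · intro a ha; exact (mem_filter.mp ha).2
  · intro a ha; simp [ha]
  · intro a ha; simp
  · intro a ha; simp
  · intro a ha; exact hfg a (mem_filter.mp ha).2

lemma fin_sum_to_nat {N : ℕ} (s : Finset ℕ) (hs : ∀ a ∈ s, a < N)
    (f : Fin N → ℝ) (g : ℕ → ℝ) (hfg : ∀ k : Fin N, (k : ℕ) ∈ s → f k = g k) :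
    ∑ k ∈ univ.filter (fun k : Fin N => (k : ℕ) ∈ s), f k = ∑ a ∈ s, g a := by
  refine Finset.sum_bij' (fun (k : Fin N) _ => (k : ℕ))
    (fun (a : ℕ) ha => (⟨a, hs a ha⟩ : Fin N)) ?_ ?_ ?_ ?_ ?_
  · intro a ha; exact (mem_filter.mp ha).2
  · intro a ha; simp [ha]
  · intro a ha; simp
  · intro a ha; simp
  · intro a ha; exact hfg a (mem_filter.mp ha).2

/-- If all stations have equal transmission durations and all airtime fractions
equal `1/N`, then all transformed attempt rates are equal. -/
theorem equal_airtime_symmetric (N : ℕ) (Te Ts : ℝ)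
    (hTe : 0 < Te) (hTs : 0 < Ts)
    (x : Fin N → ℝ) (hx : ∀ j, 0 < x j)
    (X : ℝ) (hX : X = Te + ∑ j, Ts * x j *
      ∏ k ∈ Finset.univ.filter (· < j), (1 + x k))
    (hT : ∀ i : Fin N,
      (x i / X) * (Ts * (∏ j ∈ Finset.univ.filter (· < i), (1 + x j)) +
        ∑ j ∈ Finset.univ.filter (i < ·), Ts * x j *
          ∏ k ∈ Finset.univ.filter (fun k => k < j ∧ k ≠ i), (1 + x k)) =
      1 / (N : ℝ)) :
    ∀ i j, x i = x j := by
  set y : ℕ → ℝ := fun m => if h : m < N then x ⟨m, h⟩ else 0 with hy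
  have hyx : ∀ k : Fin N, y (k : ℕ) = x k := fun k => by
    simp [hy, k.2]
  have hx1 : ∀ k : Fin N, 0 < 1 + x k := fun k => by linarith [hx k]
  have B : ∀ j : Fin N, (∏ k ∈ univ.filter (· < j), (1 + x k))
      = ∏ k ∈ range (j : ℕ), (1 + y k) := by
    intro j
    rw [show (univ.filter (· < j)) = univ.filter (fun k : Fin N => (k : ℕ) ∈ range (j : ℕ))
      by ext k; simp only [mem_filter, mem_univ, true_and, mem_range, Fin.lt_def]]
    exact fin_prod_to_nat _ (fun a ha => lt_trans (mem_range.mp ha) j.2) _ _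
      (fun k _ => by rw [hyx k])
  set Q : ℝ := ∏ k : Fin N, (1 + x k) with hQ
  have hQy : Q = ∏ k ∈ range N, (1 + y k) := by
    have huniv : univ.filter (fun k : Fin N => (k : ℕ) ∈ range N) = univ := by
      ext k; simp [k.2]
    rw [hQ, ← huniv]
    exact fin_prod_to_nat _ (fun a ha => mem_range.mp ha) _ _ (fun k _ => by rw [hyx k])
  have hQpos : 0 < Q := Finset.prod_pos (fun k _ => hx1 k)
  have hXpos : 0 < X := by
    rw [hX]
    have h0 : 0 ≤ ∑ j, Ts * x j * ∏ k ∈ univ.filter (· < j), (1 + x k) := by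
      apply Finset.sum_nonneg
      intro j _
      have hp : 0 < ∏ k ∈ univ.filter (· < j), (1 + x k) :=
        Finset.prod_pos (fun k _ => hx1 k)
      have := hx j
      positivity
    linarith
  have key : ∀ i : Fin N,
      Ts * (∏ j ∈ univ.filter (· < i), (1 + x j)) +
        ∑ j ∈ univ.filter (i < ·), Ts * x j *
          ∏ k ∈ univ.filter (fun k => k < j ∧ k ≠ i), (1 + x k)
      = Ts * Q / (1 + x i) := by
    intro i
    rw [eq_div_iff (ne_of_gt (hx1 i))]
    have step1 : ∀ j : Fin N, i < j →
        (1 + x i) * (∏ k ∈ univ.filter (fun k => k < j ∧ k ≠ i), (1 + x k))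
          = ∏ k ∈ univ.filter (· < j), (1 + x k) := by
      intro j hij
      have hset : univ.filter (fun k : Fin N => k < j ∧ k ≠ i)
          = (univ.filter (· < j)).erase i := by
        ext k
        simp only [mem_filter, mem_univ, true_and, mem_erase]
        tauto
      have hmem : i ∈ univ.filter (· < j) := by simp [hij]
      rw [hset]
      exact Finset.mul_prod_erase _ (fun k => 1 + x k) hmem
    rw [add_mul, Finset.sum_mul]
    have hsum : ∑ j ∈ univ.filter (i < ·),
        (Ts * x j * ∏ k ∈ univ.filter (fun k => k < j ∧ k ≠ i), (1 + x k)) * (1 + x i)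
        = ∑ j ∈ univ.filter (i < ·), Ts * (x j * ∏ k ∈ range (j : ℕ), (1 + y k)) := by
      apply Finset.sum_congr rfl
      intro j hj
      have hij : i < j := by simpa using hj
      rw [show (Ts * x j * ∏ k ∈ univ.filter (fun k => k < j ∧ k ≠ i), (1 + x k)) * (1 + x i)
          = Ts * x j * ((1 + x i) * ∏ k ∈ univ.filter (fun k => k < j ∧ k ≠ i), (1 + x k))
          by ring, step1 j hij, B j]
      ring
    rw [hsum]
    have hC : ∑ j ∈ univ.filter (i < ·), Ts * (x j * ∏ k ∈ range (j : ℕ), (1 + y k))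
        = Ts * ∑ j ∈ Ico ((i : ℕ) + 1) N, y j * ∏ k ∈ range j, (1 + y k) := by
      rw [Finset.mul_sum]
      rw [show (univ.filter (i < ·))
          = univ.filter (fun k : Fin N => (k : ℕ) ∈ Ico ((i : ℕ) + 1) N) by
        ext k
        simp only [mem_filter, mem_univ, true_and, mem_Ico, Fin.lt_def]
        have := k.2; omega]
      apply fin_sum_to_nat _ (fun a ha => (mem_Ico.mp ha).2) _ _
      intro k hk
      rw [hyx k]
    rw [hC]
    have hA : (Ts * ∏ j ∈ univ.filter (· < i), (1 + x j)) * (1 + x i)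
        = Ts * ∏ k ∈ range ((i : ℕ) + 1), (1 + y k) := by
      rw [B i, prod_range_succ, hyx i]; ring
    rw [hA, ← mul_add, tele_range y ((i : ℕ) + 1) N i.2, hQy]
  have hconst : ∀ i : Fin N, x i / (1 + x i) * (Ts * Q / X) = 1 / (N : ℝ) := by
    intro i
    have h := hT i
    rw [key i] at h
    rw [← h]
    field_simp
  intro i j
  have h1 := hconst i
  have h2 := hconst j
  rw [← h2] at h1
  have hTQX : 0 < Ts * Q / X := by positivity
  have h3 : x i / (1 + x i) = x j / (1 + x j) :=
    mul_right_cancel₀ (ne_of_gt hTQX) h1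
  have h4 : x i * (1 + x j) = x j * (1 + x i) := by
    rw [div_eq_div_iff (ne_of_gt (hx1 i)) (ne_of_gt (hx1 j))] at h3
    linarith [h3]
  nlinarith [h4]
end
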